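/- Let I be an acyclic set of a digraph G. Then any enumeration of I is a reduction sequence of G, and the result of iterated single-vertex reductions along this enumeration equals the I-reduction G^{-I}, defined as the digraph on V \ I with arc (u,w) iff (u,w) ∈ G or there is a path in G from u to w all of whose internal vertices lie in I. -/

import Mathlib

/-- The `v`-reduction of a digraph. -/
def gReduce {V : Type*} (G : V → V → Prop) (v : V) : V → V → Prop :=
  fun a b => a ≠ v ∧ b ≠ v ∧ (G a b ∨ (G a v ∧ G v b))

/-- There is a path in `G` from `u` to `w` all of whose internal vertices lie in `I`
(and there is at least one internal vertex). -/
def PathThrough {V : Type*} (G : V → V → Prop) (I : Set V) (u w : V) : Prop :=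
  ∃ l : List V, l ≠ [] ∧ l.Nodup ∧ (∀ i ∈ l, i ∈ I) ∧ List.Chain G u (l ++ [w])

/-- The simultaneous `I`-reduction of a digraph: an arc `(u,w)` (with `u,w ∉ I`)
iff `(u,w) ∈ G` or there is a path in `G` from `u` to `w` through `I`. -/
def gReduceSet {V : Type*} (G : V → V → Prop) (I : Set V) : V → V → Prop :=
  fun a b => a ∉ I ∧ b ∉ I ∧ (G a b ∨ PathThrough G I a b)

/-- `I` is an acyclic set of `G`. -/
def AcyclicIn {V : Type*} (G : V → V → Prop) (I : Set V) : Prop :=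
  ∀ a ∈ I, ¬ ∃ l : List V, (∀ i ∈ l, i ∈ I) ∧ List.Chain G a (l ++ [a])

/-- `s` is a reduction sequence of `G`. -/
def IsRedSeqG {V : Type*} (G : V → V → Prop) : List V → Prop
  | [] => True
  | v :: t => ¬ G v v ∧ IsRedSeqG (gReduce G v) t

namespace Stmt3Aux

variable {V : Type*}

/-- Expand a chain in `gReduce G v` to a chain in `G` inserting `v`'s. -/
lemma exp (G : V → V → Prop) (v : V) :
    ∀ (l : List V) (u w : V), List.Chain (gReduce G v) u (l ++ [w]) →
      ∃ l' : List V, (∀ i ∈ l', i ∈ l ∨ i = v) ∧ List.Chain G u (l' ++ [w]) := by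
  intro l
  induction l with
  | nil =>
    intro u w h
    rw [List.Chain, List.nil_append, List.isChain_pair] at h
    obtain ⟨hu, hw, hG⟩ := h
    rcases hG with h | ⟨h1, h2⟩
    · exact ⟨[], by simp, by simpa [List.Chain] using h⟩
    · exact ⟨[v], by simp, List.Chain.cons h1 (List.Chain.cons h2 List.Chain.nil)⟩
  | cons x t ih =>
    intro u w h
    rw [List.Chain, List.cons_append, List.chain_cons] at h
    obtain ⟨⟨hu, hx, hG⟩, hc⟩ := h
    obtain ⟨l', hsub, hc'⟩ := ih x w hc
    have hsub' : ∀ i ∈ l', i ∈ x :: t ∨ i = v := by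
      intro i hi
      rcases hsub i hi with h' | h'
      · exact Or.inl (List.mem_cons_of_mem _ h')
      · exact Or.inr h'
    rcases hG with h | ⟨h1, h2⟩
    · refine ⟨x :: l', ?_, List.Chain.cons h hc'⟩
      intro i hi
      rcases List.mem_cons.1 hi with rfl | hi
      · exact Or.inl (List.mem_cons_self)
      · exact hsub' i hi
    · refine ⟨v :: x :: l', ?_, List.Chain.cons h1 (List.Chain.cons h2 hc')⟩
      intro i hi
      rcases List.mem_cons.1 hi with rfl | hi
      · exact Or.inr rfl
      · rcases List.mem_cons.1 hi with rfl | hi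
        · exact Or.inl (List.mem_cons_self)
        · exact hsub' i hi

/-- Contract a chain in `G` to a chain in `gReduce G v`, removing `v`'s. -/
lemma rem (G : V → V → Prop) (v : V) (hvv : ¬ G v v) :
    ∀ (n : ℕ) (l : List V) (u w : V), l.length ≤ n → u ≠ v → w ≠ v →
      List.Chain G u (l ++ [w]) →
      ∃ l' : List V, (∀ i ∈ l', i ∈ l ∧ i ≠ v) ∧ List.Chain (gReduce G v) u (l' ++ [w]) := by
  intro n
  induction n with
  | zero =>
    intro l u w hlen hu hw h
    rw [List.length_eq_zero_iff.1 (Nat.le_zero.1 hlen)] at h ⊢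
    rw [List.Chain, List.nil_append, List.isChain_pair] at h
    exact ⟨[], by simp, by simpa [List.Chain, gReduce] using (⟨hu, hw, Or.inl h⟩ : gReduce G v u w)⟩
  | succ n ih =>
    intro l u w hlen hu hw h
    match l with
    | [] =>
      rw [List.Chain, List.nil_append, List.isChain_pair] at h
      exact ⟨[], by simp, by simpa [List.Chain, gReduce] using (⟨hu, hw, Or.inl h⟩ : gReduce G v u w)⟩
    | x :: t =>
      rw [List.Chain, List.cons_append, List.chain_cons] at h
      obtain ⟨hux, hc⟩ := h
      by_cases hxv : x = v
      · rw [hxv] at hux hc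
        match t with
        | [] =>
          rw [List.nil_append, List.isChain_pair] at hc
          exact ⟨[], by simp, by simpa [List.Chain, gReduce] using (⟨hu, hw, Or.inr ⟨hux, hc⟩⟩ : gReduce G v u w)⟩
        | y :: t' =>
          rw [List.cons_append, List.chain_cons] at hc
          obtain ⟨hxy, hc'⟩ := hc
          have hyv : y ≠ v := fun h' => hvv (h' ▸ hxy)
          have hlen' : t'.length ≤ n := by
            simp only [List.length_cons] at hlen; omega
          obtain ⟨l', hsub, hc''⟩ := ih t' y w hlen' hyv hw hc'
          refine ⟨y :: l', ?_, List.Chain.cons ⟨hu, hyv, Or.inr ⟨hux, hxy⟩⟩ hc''⟩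
          intro i hi
          rcases List.mem_cons.1 hi with rfl | hi
          · exact ⟨by simp, hyv⟩
          · exact ⟨by simp [(hsub i hi).1], (hsub i hi).2⟩
      · have hlen' : t.length ≤ n := by
          simp only [List.length_cons] at hlen; omega
        obtain ⟨l', hsub, hc''⟩ := ih t x w hlen' hxv hw hc
        refine ⟨x :: l', ?_, List.Chain.cons ⟨hu, hxv, Or.inl hux⟩ hc''⟩
        intro i hi
        rcases List.mem_cons.1 hi with rfl | hi
        · exact ⟨List.mem_cons_self, hxv⟩
        · exact ⟨List.mem_cons_of_mem _ (hsub i hi).1, (hsub i hi).2⟩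

/-- Any chain can be deduplicated. -/
lemma dedup (G : V → V → Prop) :
    ∀ (n : ℕ) (l : List V) (u w : V), l.length ≤ n → List.Chain G u (l ++ [w]) →
      ∃ l' : List V, l'.Nodup ∧ (∀ i ∈ l', i ∈ l) ∧ List.Chain G u (l' ++ [w]) := by
  intro n
  induction n with
  | zero =>
    intro l u w hlen h
    rw [List.length_eq_zero_iff.1 (Nat.le_zero.1 hlen)] at h ⊢
    exact ⟨[], List.nodup_nil, by simp, h⟩
  | succ n ih =>
    intro l u w hlen h
    match l with
    | [] => exact ⟨[], List.nodup_nil, by simp, h⟩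
    | x :: t =>
      rw [List.Chain, List.cons_append, List.chain_cons] at h
      obtain ⟨hux, hc⟩ := h
      by_cases hxt : x ∈ t
      · obtain ⟨m₁, m₂, rfl⟩ := List.append_of_mem hxt
        rw [List.append_assoc, List.cons_append, List.isChain_cons_split] at hc
        obtain ⟨_, hc2⟩ := hc
        have hlen' : (x :: m₂).length ≤ n := by
          simp only [List.length_cons, List.length_append] at hlen ⊢; omega
        obtain ⟨l', hnd, hsub, hc'⟩ := ih (x :: m₂) u w hlen'
          (by rw [List.Chain, List.cons_append, List.chain_cons]; exact ⟨hux, hc2⟩)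
        refine ⟨l', hnd, ?_, hc'⟩
        intro i hi
        rcases List.mem_cons.1 (hsub i hi) with rfl | hi'
        · exact List.mem_cons_self
        · exact List.mem_cons_of_mem _ (List.mem_append_right _ (List.mem_cons_of_mem _ hi'))
      · have hlen' : t.length ≤ n := by
          simp only [List.length_cons] at hlen; omega
        obtain ⟨l', hnd, hsub, hc'⟩ := ih t x w hlen' hc
        refine ⟨x :: l', List.nodup_cons.2 ⟨fun h' => hxt (hsub x h'), hnd⟩, ?_,
          List.Chain.cons hux hc'⟩
        intro i hi
        rcases List.mem_cons.1 hi with rfl | hi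
        · exact List.mem_cons_self
        · exact List.mem_cons_of_mem _ (hsub i hi)

/-- Endpoints of a chain in `gReduce G v` differ from `v`. -/
lemma chain_ne (G : V → V → Prop) (v : V) :
    ∀ (l : List V) (u w : V), List.Chain (gReduce G v) u (l ++ [w]) → u ≠ v ∧ w ≠ v := by
  intro l
  induction l with
  | nil =>
    intro u w h
    rw [List.Chain, List.nil_append, List.isChain_pair] at h
    exact ⟨h.1, h.2.1⟩
  | cons x t ih =>
    intro u w h
    rw [List.Chain, List.cons_append, List.chain_cons] at h
    exact ⟨h.1.1, (ih x w h.2).2⟩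

/-- Relaxed reduction relation (no nodup requirement). -/
def RR (G : V → V → Prop) (I : Set V) : V → V → Prop :=
  fun a b => a ∉ I ∧ b ∉ I ∧ ∃ l : List V, (∀ i ∈ l, i ∈ I) ∧ List.Chain G a (l ++ [b])

lemma key (G : V → V → Prop) (I : Set V) (v : V) (hv : v ∈ I) (hvv : ¬ G v v) :
    RR (gReduce G v) (I \ {v}) = RR G I := by
  funext a b
  apply propext
  constructor
  · rintro ⟨ha, hb, l, hl, hc⟩
    obtain ⟨hav, hbv⟩ := chain_ne G v l a b hc
    obtain ⟨l', hsub, hc'⟩ := exp G v l a b hc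
    refine ⟨fun h => ha ⟨h, hav⟩, fun h => hb ⟨h, hbv⟩, l', ?_, hc'⟩
    intro i hi
    rcases hsub i hi with h' | rfl
    · exact (hl i h').1
    · exact hv
  · rintro ⟨ha, hb, l, hl, hc⟩
    have hav : a ≠ v := fun h => ha (h ▸ hv)
    have hbv : b ≠ v := fun h => hb (h ▸ hv)
    obtain ⟨l', hsub, hc'⟩ := rem G v hvv l.length l a b le_rfl hav hbv hc
    refine ⟨fun h => ha h.1, fun h => hb h.1, l', ?_, hc'⟩
    intro i hi
    exact ⟨hl i (hsub i hi).1, (hsub i hi).2⟩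

lemma acyc_step (G : V → V → Prop) (I : Set V) (v : V) (hI : AcyclicIn G I) (hv : v ∈ I) :
    AcyclicIn (gReduce G v) (I \ {v}) := by
  rintro a ha ⟨l, hl, hc⟩
  obtain ⟨l', hsub, hc'⟩ := exp G v l a a hc
  exact hI a ha.1 ⟨l', fun i hi => (hsub i hi).elim (fun h => (hl i h).1) (fun h => h ▸ hv), hc'⟩

lemma RR_empty (G : V → V → Prop) (I : Set V) (hI : ∀ x, x ∉ I) : RR G I = G := by
  funext a b
  apply propext
  constructor
  · rintro ⟨-, -, l, hl, hc⟩
    match l with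
    | [] => rw [List.Chain, List.nil_append, List.isChain_pair] at hc; exact hc
    | x :: t => exact absurd (hl x (List.mem_cons_self)) (hI x)
  · intro h
    exact ⟨hI a, hI b, [], by simp, List.isChain_pair.2 h⟩

lemma main (s : List V) : ∀ (G : V → V → Prop) (I : Set V), AcyclicIn G I → s.Nodup →
    (∀ v, v ∈ s ↔ v ∈ I) → IsRedSeqG G s ∧ List.foldl gReduce G s = RR G I := by
  induction s with
  | nil =>
    intro G I hI hnd hs
    refine ⟨trivial, ?_⟩
    simp only [List.foldl_nil]
    exact (RR_empty G I (fun x hx => by simpa using (hs x).2 hx)).symm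
  | cons v t ih =>
    intro G I hI hnd hs
    have hv : v ∈ I := (hs v).1 (List.mem_cons_self)
    have hvv : ¬ G v v := fun h =>
      hI v hv ⟨[], by simp, by rw [List.Chain, List.nil_append, List.isChain_pair]; exact h⟩
    have hI' := acyc_step G I v hI hv
    have hvt : v ∉ t := (List.nodup_cons.1 hnd).1
    have hnd' : t.Nodup := (List.nodup_cons.1 hnd).2
    have hs' : ∀ w, w ∈ t ↔ w ∈ I \ {v} := by
      intro w
      constructor
      · intro hw
        exact ⟨(hs w).1 (List.mem_cons_of_mem _ hw), fun h => hvt (Set.mem_singleton_iff.1 h ▸ hw)⟩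
      · rintro ⟨hwI, hwv⟩
        rcases List.mem_cons.1 ((hs w).2 hwI) with rfl | h
        · exact absurd rfl hwv
        · exact h
    obtain ⟨hseq, heq⟩ := ih (gReduce G v) (I \ {v}) hI' hnd' hs'
    refine ⟨⟨hvv, hseq⟩, ?_⟩
    simp only [List.foldl_cons]
    rw [heq, key G I v hv hvv]

lemma gReduceSet_eq_RR (G : V → V → Prop) (I : Set V) : gReduceSet G I = RR G I := by
  funext a b
  apply propext
  constructor
  · rintro ⟨ha, hb, h | ⟨l, -, -, hl, hc⟩⟩
    · exact ⟨ha, hb, [], by simp, List.isChain_pair.2 h⟩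
    · exact ⟨ha, hb, l, hl, hc⟩
  · rintro ⟨ha, hb, l, hl, hc⟩
    obtain ⟨l', hnd, hsub, hc'⟩ := dedup G l.length l a b le_rfl hc
    refine ⟨ha, hb, ?_⟩
    match l' with
    | [] =>
      rw [List.Chain, List.nil_append, List.isChain_pair] at hc'
      exact Or.inl hc'
    | x :: t =>
      exact Or.inr ⟨x :: t, List.cons_ne_nil _ _, hnd, fun i hi => hl i (hsub i hi), hc'⟩

end Stmt3Aux


/-- If `I` is an acyclic set of `G`, then any enumeration `s` of `I` is a reduction
sequence of `G` and the iterated single-vertex reduction along `s` equals the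
simultaneous `I`-reduction `G^{-I}`. -/
theorem stmt3 {V : Type*} (G : V → V → Prop) (I : Set V) (hI : AcyclicIn G I)
    (s : List V) (hnd : s.Nodup) (hs : ∀ v, v ∈ s ↔ v ∈ I) :
    IsRedSeqG G s ∧ List.foldl gReduce G s = gReduceSet G I := by
  obtain ⟨h1, h2⟩ := Stmt3Aux.main s G I hI hnd hs
  exact ⟨h1, by rw [Stmt3Aux.gReduceSet_eq_RR, h2]⟩
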